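/- Fix reals z1, z2 with z2 < 0 < z1, nonnegative reals g11, g22, g12, and c2⁰ > 0. If u, v : (0, ∞) → ℝ are differentiable functions with u(c2) > 0 and v(c2) > 0 for all c2 > 0, satisfying u′(c2) = F(u(c2), c2) and v′(c2) = F(v(c2), c2) for all c2 > 0, and u(c2⁰) = v(c2⁰), then u(c2) = v(c2) for all c2 > 0. -/

import Mathlib

/-- The right-hand side of the trajectory ODE `dc1/dc2 = F(c1, c2)` for stationary
solutions of the PNP-steric system. -/
noncomputable def F (z1 z2 g11 g22 g12 c1 c2 : ℝ) : ℝ :=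
  (z1 * (1 / c2 + g22) - z2 * g12) / (z2 * (1 / c1 + g11) - z1 * g12)

lemma F_sub (z1 z2 g11 g22 g12 t' x y : ℝ) (hx : x ≠ 0) (hy : y ≠ 0)
    (hDx : z2 * (1 / x + g11) - z1 * g12 ≠ 0) (hDy : z2 * (1 / y + g11) - z1 * g12 ≠ 0)
    (hbig : x * y * (z2 * (1 / x + g11) - z1 * g12) * (z2 * (1 / y + g11) - z1 * g12) ≠ 0) :
    F z1 z2 g11 g22 g12 x t' - F z1 z2 g11 g22 g12 y t'
    = (z1 * (1 / t' + g22) - z2 * g12) * z2 * (x - y)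
      / (x * y * (z2 * (1 / x + g11) - z1 * g12) * (z2 * (1 / y + g11) - z1 * g12)) := by
  unfold F
  rw [div_sub_div _ _ hDx hDy, div_eq_div_iff (mul_ne_zero hDx hDy) hbig]
  field_simp
  ring

set_option maxHeartbeats 1000000 in
lemma F_lip (z1 z2 g11 g22 g12 a m M : ℝ)
    (hz2 : z2 < 0) (hz1 : 0 < z1)
    (hg11 : 0 ≤ g11) (hg22 : 0 ≤ g22) (hg12 : 0 ≤ g12)
    (ha : 0 < a) (hm : 0 < m) (hmM : m ≤ M) (t' : ℝ) (ht' : a ≤ t') :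
    LipschitzOnWith
      (Real.toNNReal ((z1 * (1 / a + g22) - z2 * g12) * M ^ 2 / ((-z2) * m ^ 2)))
      (fun x => F z1 z2 g11 g22 g12 x t') (Set.Icc m M) := by
  have ht0 : 0 < t' := lt_of_lt_of_le ha ht'
  have hM : (0:ℝ) < M := lt_of_lt_of_le hm hmM
  have hz2g12 : z2 * g12 ≤ 0 := mul_nonpos_of_nonpos_of_nonneg hz2.le hg12
  have hNmax : 0 < z1 * (1 / a + g22) - z2 * g12 := by
    have : 0 < z1 * (1 / a + g22) := by positivity
    linarith
  have hK0 : 0 ≤ (z1 * (1 / a + g22) - z2 * g12) * M ^ 2 / ((-z2) * m ^ 2) := by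
    apply div_nonneg
    · exact mul_nonneg hNmax.le (by positivity)
    · exact (mul_pos (neg_pos.2 hz2) (by positivity)).le
  rw [lipschitzOnWith_iff_dist_le_mul]
  intro x hx y hy
  rw [Real.coe_toNNReal _ hK0, Real.dist_eq, Real.dist_eq]
  have hx0 : 0 < x := lt_of_lt_of_le hm hx.1
  have hy0 : 0 < y := lt_of_lt_of_le hm hy.1
  set Nmax := z1 * (1 / a + g22) - z2 * g12 with hNmaxdef
  set N := z1 * (1 / t' + g22) - z2 * g12 with hNdef
  have hN : 0 < N := by
    have : 0 < z1 * (1 / t' + g22) := by positivity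
    rw [hNdef]; linarith
  have hNle : N ≤ Nmax := by
    have h1 : 1 / t' ≤ 1 / a := one_div_le_one_div_of_le ha ht'
    rw [hNdef, hNmaxdef]; nlinarith
  set Dx := z2 * (1 / x + g11) - z1 * g12 with hDxdef
  set Dy := z2 * (1 / y + g11) - z1 * g12 with hDydef
  have hzdiv : z2 / M = z2 * (1 / M) := div_eq_mul_one_div _ _
  have hz1g12 : 0 ≤ z1 * g12 := by positivity
  have hDx : Dx ≤ z2 / M := by
    have h1 : 1 / M ≤ 1 / x := one_div_le_one_div_of_le hx0 hx.2
    have h2 : z2 * (1/x) ≤ z2 * (1/M) := by nlinarith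
    have h3 : z2 * g11 ≤ 0 := mul_nonpos_of_nonpos_of_nonneg hz2.le hg11
    rw [hDxdef]; nlinarith
  have hDy : Dy ≤ z2 / M := by
    have h1 : 1 / M ≤ 1 / y := one_div_le_one_div_of_le hy0 hy.2
    have h2 : z2 * (1/y) ≤ z2 * (1/M) := by nlinarith
    have h3 : z2 * g11 ≤ 0 := mul_nonpos_of_nonpos_of_nonneg hz2.le hg11
    rw [hDydef]; nlinarith
  have hzM : z2 / M < 0 := div_neg_of_neg_of_pos hz2 hM
  have hDxneg : Dx < 0 := lt_of_le_of_lt hDx hzM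
  have hDyneg : Dy < 0 := lt_of_le_of_lt hDy hzM
  have hDxne : z2 * (1 / x + g11) - z1 * g12 ≠ 0 := hDxdef ▸ hDxneg.ne
  have hDyne : z2 * (1 / y + g11) - z1 * g12 ≠ 0 := hDydef ▸ hDyneg.ne
  have h4 : 0 < x * y * Dx * Dy := by
    have h4' : (x * y) * Dx < 0 := mul_neg_of_pos_of_neg (mul_pos hx0 hy0) hDxneg
    exact mul_pos_of_neg_of_neg h4' hDyneg
  have key : F z1 z2 g11 g22 g12 x t' - F z1 z2 g11 g22 g12 y t'
      = N * z2 * (x - y) / (x * y * Dx * Dy) := by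
    rw [hNdef, hDxdef, hDydef]
    exact F_sub z1 z2 g11 g22 g12 t' x y hx0.ne' hy0.ne' hDxne hDyne
      (by rw [← hDxdef, ← hDydef]; exact h4.ne')
  clear_value N Nmax Dx Dy
  have hDD : (z2 / M) * (z2 / M) ≤ Dx * Dy := by
    have h1 : (z2/M) * Dy ≤ Dx * Dy := mul_le_mul_of_nonpos_right hDx hDyneg.le
    have h2 : (z2/M) * (z2/M) ≤ (z2/M) * Dy := mul_le_mul_of_nonpos_left hDy hzM.le
    linarith
  have hDDpos : 0 < Dx * Dy := mul_pos_of_neg_of_neg hDxneg hDyneg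
  have hxy : m * m ≤ x * y := mul_le_mul hx.1 hy.1 hm.le hx0.le
  have h5 : N * z2 / (x * y * Dx * Dy) ≤ 0 :=
    div_nonpos_of_nonpos_of_nonneg (mul_nonpos_of_nonneg_of_nonpos hN.le hz2.le) h4.le
  have habs : |F z1 z2 g11 g22 g12 x t' - F z1 z2 g11 g22 g12 y t'|
      = (N * (-z2) / (x * y * Dx * Dy)) * |x - y| := by
    rw [key, show N * z2 * (x - y) / (x * y * Dx * Dy)
        = (N * z2 / (x * y * Dx * Dy)) * (x - y) from by ring, abs_mul,
      abs_of_nonpos h5]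
    ring
  have hscalar : N * (-z2) / (x * y * Dx * Dy) ≤ Nmax * M ^ 2 / ((-z2) * m ^ 2) := by
    rw [div_le_div_iff₀ h4 (mul_pos (neg_pos.2 hz2) (by positivity))]
    have h6 : (m * m) * ((z2/M) * (z2/M)) ≤ (x * y) * (Dx * Dy) :=
      mul_le_mul hxy hDD ((mul_pos_of_neg_of_neg hzM hzM).le) (by positivity)
    have h9 : N * (z2^2 * m^2) ≤ Nmax * (z2^2 * m^2) :=
      mul_le_mul_of_nonneg_right hNle (by positivity)
    have h10 : Nmax * M^2 * ((m * m) * ((z2/M) * (z2/M))) ≤ Nmax * M^2 * ((x*y) * (Dx*Dy)) :=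
      mul_le_mul_of_nonneg_left h6 (mul_pos hNmax (pow_pos hM 2)).le
    have h11 : Nmax * M^2 * ((m * m) * ((z2/M) * (z2/M))) = Nmax * (z2^2 * m^2) := by
      field_simp
    have h12 : N * -z2 * (-z2 * m ^ 2) = N * (z2^2 * m^2) := by ring
    rw [h12]
    linarith
  calc |(fun x => F z1 z2 g11 g22 g12 x t') x - (fun x => F z1 z2 g11 g22 g12 x t') y|
      = (N * (-z2) / (x * y * Dx * Dy)) * |x - y| := habs
    _ ≤ (Nmax * M ^ 2 / ((-z2) * m ^ 2)) * |x - y| :=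
        mul_le_mul_of_nonneg_right hscalar (abs_nonneg _)

/-- Uniqueness part of Lemma 2(1) of the paper: the solution trajectory passing through a
given point of the positive quadrant is unique. -/
theorem stmt3 (z1 z2 g11 g22 g12 c20 : ℝ)
    (hz2 : z2 < 0) (hz1 : 0 < z1)
    (hg11 : 0 ≤ g11) (hg22 : 0 ≤ g22) (hg12 : 0 ≤ g12)
    (hc20 : 0 < c20)
    (u v : ℝ → ℝ)
    (hu_pos : ∀ c2 : ℝ, 0 < c2 → 0 < u c2)
    (hv_pos : ∀ c2 : ℝ, 0 < c2 → 0 < v c2)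
    (hu_ode : ∀ c2 : ℝ, 0 < c2 → HasDerivAt u (F z1 z2 g11 g22 g12 (u c2) c2) c2)
    (hv_ode : ∀ c2 : ℝ, 0 < c2 → HasDerivAt v (F z1 z2 g11 g22 g12 (v c2) c2) c2)
    (h0 : u c20 = v c20) :
    ∀ c2 : ℝ, 0 < c2 → u c2 = v c2 := by
  intro c2 hc2
  set a := min c2 c20 / 2 with hadef
  set b := max c2 c20 + 1 with hbdef
  have hmin : 0 < min c2 c20 := lt_min hc2 hc20
  have ha : 0 < a := by rw [hadef]; linarith
  have hc2mem : c2 ∈ Set.Ioo a b := by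
    constructor
    · rw [hadef]; have := min_le_left c2 c20; linarith
    · rw [hbdef]; have := le_max_left c2 c20; linarith
  have hc20mem : c20 ∈ Set.Ioo a b := by
    constructor
    · rw [hadef]; have := min_le_right c2 c20; linarith
    · rw [hbdef]; have := le_max_right c2 c20; linarith
  have hab : a ≤ b := hc2mem.1.le.trans hc2mem.2.le
  have hIccpos : ∀ t ∈ Set.Icc a b, 0 < t := fun t ht => lt_of_lt_of_le ha ht.1
  have hu_cont : ContinuousOn u (Set.Icc a b) := fun t ht =>
    ((hu_ode t (hIccpos t ht)).continuousAt).continuousWithinAt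
  have hv_cont : ContinuousOn v (Set.Icc a b) := fun t ht =>
    ((hv_ode t (hIccpos t ht)).continuousAt).continuousWithinAt
  have hne : (Set.Icc a b).Nonempty := Set.nonempty_Icc.2 hab
  obtain ⟨x1, hx1, hux1⟩ := isCompact_Icc.exists_isMinOn hne hu_cont
  obtain ⟨x2, hx2, hvx2⟩ := isCompact_Icc.exists_isMinOn hne hv_cont
  obtain ⟨y1, hy1, huy1⟩ := isCompact_Icc.exists_isMaxOn hne hu_cont
  obtain ⟨y2, hy2, hvy2⟩ := isCompact_Icc.exists_isMaxOn hne hv_cont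
  set m := min (u x1) (v x2) with hmdef
  set M := max (u y1) (v y2) with hMdef
  have hm : 0 < m := lt_min (hu_pos x1 (hIccpos x1 hx1)) (hv_pos x2 (hIccpos x2 hx2))
  have hc20Icc : c20 ∈ Set.Icc a b := Set.Ioo_subset_Icc_self hc20mem
  have hmM : m ≤ M := by
    have h1 : u x1 ≤ u c20 := hux1 hc20Icc
    have h2 : u c20 ≤ u y1 := huy1 hc20Icc
    have := min_le_left (u x1) (v x2)
    have := le_max_left (u y1) (v y2)
    linarith
  have hclamp : ∀ t ∈ Set.Ioo a b, max a (min t b) = t := fun t ht => by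
    rw [min_eq_left ht.2.le, max_eq_right ht.1.le]
  have hlip : ∀ t : ℝ,
      LipschitzOnWith
        (Real.toNNReal ((z1 * (1 / a + g22) - z2 * g12) * M ^ 2 / ((-z2) * m ^ 2)))
        ((fun t x => F z1 z2 g11 g22 g12 x (max a (min t b))) t) (Set.Icc m M) :=
    fun t => F_lip z1 z2 g11 g22 g12 a m M hz2 hz1 hg11 hg22 hg12 ha hm hmM _
      (le_max_left _ _)
  have hf : ∀ t ∈ Set.Ioo a b,
      HasDerivAt u ((fun t x => F z1 z2 g11 g22 g12 x (max a (min t b))) t (u t)) t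
        ∧ u t ∈ Set.Icc m M := by
    intro t ht
    have htpos : 0 < t := hIccpos t (Set.Ioo_subset_Icc_self ht)
    refine ⟨?_, ?_⟩
    · simpa [hclamp t ht] using hu_ode t htpos
    · exact ⟨(min_le_left _ _).trans (hux1 (Set.Ioo_subset_Icc_self ht)),
        (huy1 (Set.Ioo_subset_Icc_self ht)).trans (le_max_left _ _)⟩
  have hg : ∀ t ∈ Set.Ioo a b,
      HasDerivAt v ((fun t x => F z1 z2 g11 g22 g12 x (max a (min t b))) t (v t)) t
        ∧ v t ∈ Set.Icc m M := by
    intro t ht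
    have htpos : 0 < t := hIccpos t (Set.Ioo_subset_Icc_self ht)
    refine ⟨?_, ?_⟩
    · simpa [hclamp t ht] using hv_ode t htpos
    · exact ⟨(min_le_right _ _).trans (hvx2 (Set.Ioo_subset_Icc_self ht)),
        (hvy2 (Set.Ioo_subset_Icc_self ht)).trans (le_max_right _ _)⟩
  exact ODE_solution_unique_of_mem_Ioo (fun t _ => hlip t) hc20mem hf hg h0 hc2mem
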